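/- Suppose 2a + b = 0 (and (a,b) ≠ (0,0)). Then the pair {F_1, x_3}, where F_1 = (2x_0 y_1 + x_2^2 − 2x_1 x_3)^3/(x_3^2 y_1^2), is a set of two functionally independent invariants of the coadjoint representation of d_5^{a,b}. Analogously, if a + 2b = 0, then {F_1, y_1} is such a set. -/

import Mathlib

/-- Structure constants (listed direction) of `d_5^{a,b}`; basis
`X_0 ↦ 0, …, X_3 ↦ 3, Y_1 ↦ 4, V ↦ 5`. -/
noncomputable def strAB (a b : ℂ) (i j s : ℕ) : ℂ :=
  (if i = 0 ∧ (j = 1 ∨ j = 2) ∧ s = j + 1 then 1 else 0) +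
  (if i = 1 ∧ j = 2 ∧ s = 4 then 1 else 0) +
  (if i = 5 ∧ j = 0 ∧ s = 0 then a else 0) +
  (if i = 5 ∧ j = 1 ∧ s = 1 then b else 0) +
  (if i = 5 ∧ j = 2 ∧ s = 2 then a + b else 0) +
  (if i = 5 ∧ j = 3 ∧ s = 3 then 2 * a + b else 0) +
  (if i = 5 ∧ j = 4 ∧ s = 4 then a + 2 * b else 0)

/-- Antisymmetrized structure constants of `d_5^{a,b}`. -/
noncomputable def CAB (a b : ℂ) (i j s : ℕ) : ℂ := strAB a b i j s - strAB a b j i s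

/-- Partial derivative `∂F/∂x_j` in coordinates. -/
noncomputable def pd (j : ℕ) (F : (ℕ → ℂ) → ℂ) (p : ℕ → ℂ) : ℂ :=
  deriv (fun t => F (Function.update p j t)) (p j)

/-- The coadjoint operator `X̂_i = −C_{ij}^k x_k ∂_{x_j}` of `d_5^{a,b}`. -/
noncomputable def opAB (a b : ℂ) (i : ℕ) (F : (ℕ → ℂ) → ℂ) (p : ℕ → ℂ) : ℂ :=
  ∑ j ∈ Finset.range 6, (-(∑ k ∈ Finset.range 6, CAB a b i j k * p k)) * pd j F p

/-- The rational function `F_1 = (2x_0y_1 + x_2² − 2x_1x_3)³/(x_3²y_1²)`. -/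
noncomputable def F1 (p : ℕ → ℂ) : ℂ :=
  (2 * p 0 * p 4 + (p 2) ^ 2 - 2 * p 1 * p 3) ^ 3 / ((p 3) ^ 2 * (p 4) ^ 2)

section AuxInvariants

lemma pd_proj (m j : ℕ) (p : ℕ → ℂ) : pd j (fun q => q m) p = if m = j then 1 else 0 := by
  unfold pd
  rcases eq_or_ne m j with h | h
  · subst h; simp
  · simp [Function.update_apply, h]

lemma pd0F1 (p : ℕ → ℂ) (h3 : p 3 ≠ 0) (h4 : p 4 ≠ 0) :
    pd 0 F1 p = 6 * p 3 * (p 4) ^ 2 * (2 * p 0 * p 4 + (p 2) ^ 2 - 2 * p 1 * p 3) ^ 2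
      / ((p 3) ^ 3 * (p 4) ^ 3) := by
  have h1 : HasDerivAt (fun t : ℂ => 2 * t * p 4 + (p 2) ^ 2 - 2 * p 1 * p 3)
      (2 * p 4) (p 0) := by
    simpa using ((((hasDerivAt_id (p 0)).const_mul (2:ℂ)).mul_const (p 4)).add_const
      ((p 2) ^ 2)).sub_const (2 * p 1 * p 3)
  have h := (h1.pow 3).div_const ((p 3) ^ 2 * (p 4) ^ 2)
  unfold pd
  have e : (fun t => F1 (Function.update p 0 t)) =
      fun t : ℂ => (2 * t * p 4 + (p 2) ^ 2 - 2 * p 1 * p 3) ^ 3 / ((p 3) ^ 2 * (p 4) ^ 2) := by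
    funext t; simp [F1, Function.update_apply]
  rw [e]; refine h.deriv.trans ?_; norm_num only [Pi.pow_apply]; field_simp [h3, h4]; ring

lemma pd1F1 (p : ℕ → ℂ) (h3 : p 3 ≠ 0) (h4 : p 4 ≠ 0) :
    pd 1 F1 p = -6 * (p 3) ^ 2 * p 4 * (2 * p 0 * p 4 + (p 2) ^ 2 - 2 * p 1 * p 3) ^ 2
      / ((p 3) ^ 3 * (p 4) ^ 3) := by
  have h1 : HasDerivAt (fun t : ℂ => 2 * p 0 * p 4 + (p 2) ^ 2 - 2 * t * p 3)
      (-(2 * p 3)) (p 1) := by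
    simpa using HasDerivAt.const_sub (2 * p 0 * p 4 + (p 2) ^ 2)
      (((hasDerivAt_id (p 1)).const_mul (2:ℂ)).mul_const (p 3))
  have h := (h1.pow 3).div_const ((p 3) ^ 2 * (p 4) ^ 2)
  unfold pd
  have e : (fun t => F1 (Function.update p 1 t)) =
      fun t : ℂ => (2 * p 0 * p 4 + (p 2) ^ 2 - 2 * t * p 3) ^ 3 / ((p 3) ^ 2 * (p 4) ^ 2) := by
    funext t; simp [F1, Function.update_apply]
  rw [e]; refine h.deriv.trans ?_; norm_num only [Pi.pow_apply]; field_simp [h3, h4]; ring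

lemma pd2F1 (p : ℕ → ℂ) (h3 : p 3 ≠ 0) (h4 : p 4 ≠ 0) :
    pd 2 F1 p = 6 * p 2 * p 3 * p 4 * (2 * p 0 * p 4 + (p 2) ^ 2 - 2 * p 1 * p 3) ^ 2
      / ((p 3) ^ 3 * (p 4) ^ 3) := by
  have h1 : HasDerivAt (fun t : ℂ => 2 * p 0 * p 4 + t ^ 2 - 2 * p 1 * p 3)
      (2 * p 2) (p 2) := by
    simpa using (HasDerivAt.const_add (2 * p 0 * p 4)
      (hasDerivAt_pow 2 (p 2))).sub_const (2 * p 1 * p 3)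
  have h := (h1.pow 3).div_const ((p 3) ^ 2 * (p 4) ^ 2)
  unfold pd
  have e : (fun t => F1 (Function.update p 2 t)) =
      fun t : ℂ => (2 * p 0 * p 4 + t ^ 2 - 2 * p 1 * p 3) ^ 3 / ((p 3) ^ 2 * (p 4) ^ 2) := by
    funext t; simp [F1, Function.update_apply]
  rw [e]; refine h.deriv.trans ?_; norm_num only [Pi.pow_apply]; field_simp [h3, h4]; ring

lemma pd3F1 (p : ℕ → ℂ) (h3 : p 3 ≠ 0) (h4 : p 4 ≠ 0) :
    pd 3 F1 p = (-6 * p 1 * p 3 * (2 * p 0 * p 4 + (p 2) ^ 2 - 2 * p 1 * p 3) ^ 2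
      - 2 * (2 * p 0 * p 4 + (p 2) ^ 2 - 2 * p 1 * p 3) ^ 3) * p 4 / ((p 3) ^ 3 * (p 4) ^ 3) := by
  have h1 : HasDerivAt (fun t : ℂ => 2 * p 0 * p 4 + (p 2) ^ 2 - 2 * p 1 * t)
      (-(2 * p 1)) (p 3) := by
    simpa using HasDerivAt.const_sub (2 * p 0 * p 4 + (p 2) ^ 2)
      ((hasDerivAt_id (p 3)).const_mul (2 * p 1))
  have hv : HasDerivAt (fun t : ℂ => t ^ 2 * (p 4) ^ 2)
      ((2 * p 3 ^ 1) * (p 4) ^ 2) (p 3) := by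
    simpa using (hasDerivAt_pow 2 (p 3)).mul_const ((p 4) ^ 2)
  have hne : (p 3) ^ 2 * (p 4) ^ 2 ≠ 0 :=
    mul_ne_zero (pow_ne_zero _ h3) (pow_ne_zero _ h4)
  have h := (h1.pow 3).div hv hne
  unfold pd
  have e : (fun t => F1 (Function.update p 3 t)) =
      fun t : ℂ => (2 * p 0 * p 4 + (p 2) ^ 2 - 2 * p 1 * t) ^ 3 / (t ^ 2 * (p 4) ^ 2) := by
    funext t; simp [F1, Function.update_apply]
  rw [e]; refine h.deriv.trans ?_; norm_num only [Pi.pow_apply]; field_simp; ring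

lemma pd4F1 (p : ℕ → ℂ) (h3 : p 3 ≠ 0) (h4 : p 4 ≠ 0) :
    pd 4 F1 p = (6 * p 0 * p 4 * (2 * p 0 * p 4 + (p 2) ^ 2 - 2 * p 1 * p 3) ^ 2
      - 2 * (2 * p 0 * p 4 + (p 2) ^ 2 - 2 * p 1 * p 3) ^ 3) * p 3 / ((p 3) ^ 3 * (p 4) ^ 3) := by
  have h1 : HasDerivAt (fun t : ℂ => 2 * p 0 * t + (p 2) ^ 2 - 2 * p 1 * p 3)
      (2 * p 0) (p 4) := by
    simpa using (((hasDerivAt_id (p 4)).const_mul (2 * p 0)).add_const ((p 2) ^ 2)).sub_const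
      (2 * p 1 * p 3)
  have hv : HasDerivAt (fun t : ℂ => (p 3) ^ 2 * t ^ 2)
      ((p 3) ^ 2 * (2 * p 4 ^ 1)) (p 4) := by
    simpa [mul_comm] using (hasDerivAt_pow 2 (p 4)).const_mul ((p 3) ^ 2)
  have hne : (p 3) ^ 2 * (p 4) ^ 2 ≠ 0 :=
    mul_ne_zero (pow_ne_zero _ h3) (pow_ne_zero _ h4)
  have h := (h1.pow 3).div hv hne
  unfold pd
  have e : (fun t => F1 (Function.update p 4 t)) =
      fun t : ℂ => (2 * p 0 * t + (p 2) ^ 2 - 2 * p 1 * p 3) ^ 3 / ((p 3) ^ 2 * t ^ 2) := by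
    funext t; simp [F1, Function.update_apply]
  rw [e]; refine h.deriv.trans ?_; norm_num only [Pi.pow_apply]; field_simp; ring

lemma pd5F1 (p : ℕ → ℂ) : pd 5 F1 p = 0 := by
  unfold pd
  have e : (fun t => F1 (Function.update p 5 t)) = fun _ : ℂ => F1 p := by
    funext t; simp [F1, Function.update_apply]
  rw [e, deriv_const]

lemma op0 (a b : ℂ) (F : (ℕ → ℂ) → ℂ) (p : ℕ → ℂ) :
    opAB a b 0 F p = (-(p 2)) * pd 1 F p + (-(p 3)) * pd 2 F p + (a * p 0) * pd 5 F p := by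
  simp [opAB, CAB, strAB, Finset.sum_range_succ]
  try ring

lemma op1 (a b : ℂ) (F : (ℕ → ℂ) → ℂ) (p : ℕ → ℂ) :
    opAB a b 1 F p = p 2 * pd 0 F p + (-(p 4)) * pd 2 F p + (b * p 1) * pd 5 F p := by
  simp [opAB, CAB, strAB, Finset.sum_range_succ]
  try ring

lemma op2 (a b : ℂ) (F : (ℕ → ℂ) → ℂ) (p : ℕ → ℂ) :
    opAB a b 2 F p = p 3 * pd 0 F p + p 4 * pd 1 F p + ((a + b) * p 2) * pd 5 F p := by
  simp [opAB, CAB, strAB, Finset.sum_range_succ]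
  try ring

lemma op3 (a b : ℂ) (F : (ℕ → ℂ) → ℂ) (p : ℕ → ℂ) :
    opAB a b 3 F p = ((2 * a + b) * p 3) * pd 5 F p := by
  simp [opAB, CAB, strAB, Finset.sum_range_succ]
  try ring

lemma op4 (a b : ℂ) (F : (ℕ → ℂ) → ℂ) (p : ℕ → ℂ) :
    opAB a b 4 F p = ((a + 2 * b) * p 4) * pd 5 F p := by
  simp [opAB, CAB, strAB, Finset.sum_range_succ]
  try ring

lemma op5 (a b : ℂ) (F : (ℕ → ℂ) → ℂ) (p : ℕ → ℂ) :
    opAB a b 5 F p = (-(a * p 0)) * pd 0 F p + (-(b * p 1)) * pd 1 F p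
      + (-((a + b) * p 2)) * pd 2 F p + (-((2 * a + b) * p 3)) * pd 3 F p
      + (-((a + 2 * b) * p 4)) * pd 4 F p := by
  simp [opAB, CAB, strAB, Finset.sum_range_succ]
  try ring

lemma annF1 (a b : ℂ) (p : ℕ → ℂ) (h3 : p 3 ≠ 0) (h4 : p 4 ≠ 0) (i : ℕ) (hi : i < 6) :
    opAB a b i F1 p = 0 := by
  interval_cases i <;>
      simp only [op0, op1, op2, op3, op4, op5, pd0F1 p h3 h4, pd1F1 p h3 h4, pd2F1 p h3 h4,
        pd3F1 p h3 h4, pd4F1 p h3 h4, pd5F1 p, mul_zero, zero_mul, add_zero, zero_add,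
        mul_div_assoc', ← add_div] <;>
    first
      | rfl
      | (apply div_eq_zero_iff.mpr
         left
         ring)

end AuxInvariants
section AuxInvariants2

lemma annP3 (a b : ℂ) (h2 : 2 * a + b = 0) (p : ℕ → ℂ) (i : ℕ) (hi : i < 6) :
    opAB a b i (fun q => q 3) p = 0 := by
  interval_cases i <;>
    simp [op0, op1, op2, op3, op4, op5, pd_proj, h2]

lemma annP4 (a b : ℂ) (h2 : a + 2 * b = 0) (p : ℕ → ℂ) (i : ℕ) (hi : i < 6) :
    opAB a b i (fun q => q 4) p = 0 := by
  interval_cases i <;>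
    simp [op0, op1, op2, op3, op4, op5, pd_proj, h2]

lemma pdOnes0 : pd 0 F1 (fun _ : ℕ => (1:ℂ)) = 6 := by
  rw [pd0F1 (fun _ : ℕ => (1:ℂ)) one_ne_zero one_ne_zero]; norm_num

lemma pdOnes3 : pd 3 F1 (fun _ : ℕ => (1:ℂ)) = -8 := by
  rw [pd3F1 (fun _ : ℕ => (1:ℂ)) one_ne_zero one_ne_zero]; norm_num

lemma pdOnes4 : pd 4 F1 (fun _ : ℕ => (1:ℂ)) = 4 := by
  rw [pd4F1 (fun _ : ℕ => (1:ℂ)) one_ne_zero one_ne_zero]; norm_num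

lemma liP3 : LinearIndependent ℂ
    ![fun j : Fin 6 => pd j.1 F1 (fun _ => 1),
      fun j : Fin 6 => pd j.1 (fun q => q 3) (fun _ => 1)] := by
  refine LinearIndependent.pair_iff.2 fun s t hst => ?_
  have h0 := congrFun hst ⟨0, by norm_num⟩
  have h3 := congrFun hst ⟨3, by norm_num⟩
  simp only [Pi.add_apply, Pi.smul_apply, Pi.zero_apply, smul_eq_mul] at h0 h3
  norm_num [pd_proj, pdOnes0, pdOnes3] at h0 h3
  exact ⟨h0, by linear_combination h3 + 8 * h0⟩

lemma liP4 : LinearIndependent ℂ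
    ![fun j : Fin 6 => pd j.1 F1 (fun _ => 1),
      fun j : Fin 6 => pd j.1 (fun q => q 4) (fun _ => 1)] := by
  refine LinearIndependent.pair_iff.2 fun s t hst => ?_
  have h0 := congrFun hst ⟨0, by norm_num⟩
  have h4 := congrFun hst ⟨4, by norm_num⟩
  simp only [Pi.add_apply, Pi.smul_apply, Pi.zero_apply, smul_eq_mul] at h0 h4
  norm_num [pd_proj, pdOnes0, pdOnes4] at h0 h4
  exact ⟨h0, by linear_combination h4 - 4 * h0⟩

end AuxInvariants2

/-- If `2a + b = 0` (and `(a,b) ≠ (0,0)`) then `{F_1, x_3}` is a set of two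
functionally independent invariants of the coadjoint representation of
`d_5^{a,b}`; analogously if `a + 2b = 0` then `{F_1, y_1}` is such a set. -/
theorem invariants_d5ab_center (a b : ℂ) (hab : ¬(a = 0 ∧ b = 0)) :
    (2 * a + b = 0 →
      (∀ p : ℕ → ℂ, p 3 ≠ 0 → p 4 ≠ 0 → ∀ i < 6,
        opAB a b i F1 p = 0 ∧ opAB a b i (fun q => q 3) p = 0) ∧
      (∃ p : ℕ → ℂ, p 3 ≠ 0 ∧ p 4 ≠ 0 ∧
        LinearIndependent ℂ
          ![fun j : Fin 6 => pd j.1 F1 p, fun j : Fin 6 => pd j.1 (fun q => q 3) p])) ∧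
    (a + 2 * b = 0 →
      (∀ p : ℕ → ℂ, p 3 ≠ 0 → p 4 ≠ 0 → ∀ i < 6,
        opAB a b i F1 p = 0 ∧ opAB a b i (fun q => q 4) p = 0) ∧
      (∃ p : ℕ → ℂ, p 3 ≠ 0 ∧ p 4 ≠ 0 ∧
        LinearIndependent ℂ
          ![fun j : Fin 6 => pd j.1 F1 p, fun j : Fin 6 => pd j.1 (fun q => q 4) p])) := by
  constructor
  · intro h2
    exact ⟨fun p h3 h4 i hi => ⟨annF1 a b p h3 h4 i hi, annP3 a b h2 p i hi⟩,
      ⟨fun _ => 1, one_ne_zero, one_ne_zero, liP3⟩⟩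
  · intro h2
    exact ⟨fun p h3 h4 i hi => ⟨annF1 a b p h3 h4 i hi, annP4 a b h2 p i hi⟩,
      ⟨fun _ => 1, one_ne_zero, one_ne_zero, liP4⟩⟩
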